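/- Let B be the graph on nodes {s, t} ∪ {x₁,…,x_k} ∪ {y₁,…,y_k}, with edges {s, x_i} and {y_j, t} of capacity k for all i, j, and edges {x_i, y_j} of capacity 1 + ε_{i,j} with 0 < ε_{i,j} < 1/k for all i, j. Then the maximum s-t flow of B equals k². -/
import Mathlib


open Finset

/-- Capacity of the s-t cut determined by `S` (arcs from `S` to its complement). -/
def cutCap {V : Type*} [Fintype V] [DecidableEq V] (c : V → V → ℝ) (S : Finset V) : ℝ :=
  ∑ x ∈ S, ∑ y ∈ Sᶜ, c x y

/-- Minimum capacity of an s-t cut. -/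
noncomputable def minCut {V : Type*} [Fintype V] [DecidableEq V] (c : V → V → ℝ)
    (s t : V) : ℝ :=
  sInf {r | ∃ S : Finset V, s ∈ S ∧ t ∉ S ∧ r = cutCap c S}

/-- Nodes of the graph `B`: source `s`, sink `t`, and the bipartite core `x₁,…,x_k`,
`y₁,…,y_k`. -/
inductive BNode (k : ℕ) : Type
  | s : BNode k
  | t : BNode k
  | x : Fin k → BNode k
  | y : Fin k → BNode k
  deriving DecidableEq, Fintype

/-- The (symmetric) capacity function of the graph `B`: edges `{s, xᵢ}` and `{yⱼ, t}`
of capacity `k`, and edges `{xᵢ, yⱼ}` of capacity `1 + ε i j`. -/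
def Bcap (k : ℕ) (ε : Fin k → Fin k → ℝ) : BNode k → BNode k → ℝ
  | .s, .x _ => k
  | .x _, .s => k
  | .t, .y _ => k
  | .y _, .t => k
  | .x i, .y j => 1 + ε i j
  | .y j, .x i => 1 + ε i j
  | _, _ => 0


lemma x_inj {k : ℕ} : Function.Injective (BNode.x (k := k)) := fun a b h => by
  cases h; rfl

lemma y_inj {k : ℕ} : Function.Injective (BNode.y (k := k)) := fun a b h => by
  cases h; rfl

/-- Sum over the complement of a set `S` (with `t ∉ S`) decomposed by constructors. -/
lemma sum_compl_decomp {k : ℕ} (S : Finset (BNode k)) (hs : BNode.s ∈ S)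
    (ht : BNode.t ∉ S) (f : BNode k → ℝ) :
    ∑ q ∈ Sᶜ, f q = f BNode.t
      + ∑ i ∈ (univ.filter (fun i => BNode.x i ∈ S))ᶜ, f (BNode.x i)
      + ∑ j ∈ (univ.filter (fun j => BNode.y j ∈ S))ᶜ, f (BNode.y j) := by
  have hSc : Sᶜ = insert BNode.t ((univ.filter (fun i => BNode.x i ∈ S))ᶜ.image BNode.x ∪
      (univ.filter (fun j => BNode.y j ∈ S))ᶜ.image BNode.y) := by
    ext v; cases v <;> simp_all
  have h1 : BNode.t ∉ (univ.filter (fun i => BNode.x i ∈ S))ᶜ.image BNode.x ∪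
      (univ.filter (fun j => BNode.y j ∈ S))ᶜ.image BNode.y := by simp
  have h2 : Disjoint ((univ.filter (fun i => BNode.x i ∈ S))ᶜ.image BNode.x)
      ((univ.filter (fun j => BNode.y j ∈ S))ᶜ.image BNode.y) := by
    simp [Finset.disjoint_left]
  rw [hSc, Finset.sum_insert h1, Finset.sum_union h2,
    Finset.sum_image (fun a _ b _ h => x_inj h), Finset.sum_image (fun a _ b _ h => y_inj h)]
  ring

lemma cutCap_lower {k : ℕ} (ε : Fin k → Fin k → ℝ) (hε : ∀ i j, 0 < ε i j)
    (S : Finset (BNode k)) (hs : BNode.s ∈ S) (ht : BNode.t ∉ S) :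
    (k : ℝ) ^ 2 ≤ cutCap (Bcap k ε) S := by
  classical
  set A : Finset (Fin k) := univ.filter (fun i => BNode.x i ∈ S) with hA
  set B : Finset (Fin k) := univ.filter (fun j => BNode.y j ∈ S) with hB
  have hS : S = insert BNode.s (A.image BNode.x ∪ B.image BNode.y) := by
    ext v; cases v <;> simp [hA, hB, hs, ht, Finset.mem_filter]
  have h1 : BNode.s ∉ A.image BNode.x ∪ B.image BNode.y := by simp
  have h2 : Disjoint (A.image BNode.x) (B.image BNode.y) := by
    simp [Finset.disjoint_left]
  have hcompA : (univ.filter (fun i => BNode.x i ∈ S))ᶜ = Aᶜ := by rw [hA]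
  have hcompB : (univ.filter (fun j => BNode.y j ∈ S))ᶜ = Bᶜ := by rw [hB]
  have hrow_s : ∑ q ∈ Sᶜ, Bcap k ε BNode.s q = (Aᶜ.card : ℝ) * k := by
    rw [sum_compl_decomp S hs ht, hcompA, hcompB]
    simp [Bcap, mul_comm]
  have hrow_x : ∀ i : Fin k, (Bᶜ.card : ℝ) ≤ ∑ q ∈ Sᶜ, Bcap k ε (BNode.x i) q := by
    intro i
    rw [sum_compl_decomp S hs ht, hcompA, hcompB]
    have : ∑ j ∈ Bᶜ, (1 : ℝ) ≤ ∑ j ∈ Bᶜ, (1 + ε i j) := by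
      apply Finset.sum_le_sum
      intro j _
      linarith [(hε i j)]
    simp only [Bcap]
    simp only [Finset.sum_const, nsmul_eq_mul, mul_one] at this ⊢
    simpa [Bcap] using this
  have hrow_y : ∀ j : Fin k, (k : ℝ) + Aᶜ.card ≤ ∑ q ∈ Sᶜ, Bcap k ε (BNode.y j) q := by
    intro j
    rw [sum_compl_decomp S hs ht, hcompA, hcompB]
    have : ∑ i ∈ Aᶜ, (1 : ℝ) ≤ ∑ i ∈ Aᶜ, (1 + ε i j) := by
      apply Finset.sum_le_sum
      intro i _
      linarith [(hε i j)]
    simp only [Finset.sum_const, nsmul_eq_mul, mul_one] at this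
    simp only [Bcap]
    simp only [Finset.sum_const, nsmul_eq_mul, mul_one]
    linarith [this]
  have hcut : cutCap (Bcap k ε) S = (∑ q ∈ Sᶜ, Bcap k ε BNode.s q)
      + ∑ i ∈ A, ∑ q ∈ Sᶜ, Bcap k ε (BNode.x i) q
      + ∑ j ∈ B, ∑ q ∈ Sᶜ, Bcap k ε (BNode.y j) q := by
    rw [cutCap, hS, Finset.sum_insert h1, Finset.sum_union h2,
      Finset.sum_image (fun a _ b _ h => x_inj h), Finset.sum_image (fun a _ b _ h => y_inj h)]
    ring
  -- cardinalities
  have hak : (A.card : ℝ) ≤ k := by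
    exact_mod_cast (A.card_le_univ.trans_eq (by simp))
  have hbk : (B.card : ℝ) ≤ k := by
    exact_mod_cast (B.card_le_univ.trans_eq (by simp))
  have haN : A.card ≤ k := A.card_le_univ.trans_eq (by simp)
  have hbN : B.card ≤ k := B.card_le_univ.trans_eq (by simp)
  have hAc : (Aᶜ.card : ℝ) = k - A.card := by
    rw [Finset.card_compl, Fintype.card_fin, Nat.cast_sub haN]
  have hBc : (Bᶜ.card : ℝ) = k - B.card := by
    rw [Finset.card_compl, Fintype.card_fin, Nat.cast_sub hbN]
  have hx_sum : (A.card : ℝ) * (Bᶜ.card) ≤ ∑ i ∈ A, ∑ q ∈ Sᶜ, Bcap k ε (BNode.x i) q := by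
    calc (A.card : ℝ) * Bᶜ.card = ∑ _i ∈ A, (Bᶜ.card : ℝ) := by
          rw [Finset.sum_const, nsmul_eq_mul]
      _ ≤ _ := Finset.sum_le_sum (fun i _ => hrow_x i)
  have hy_sum : (B.card : ℝ) * (k + Aᶜ.card) ≤ ∑ j ∈ B, ∑ q ∈ Sᶜ, Bcap k ε (BNode.y j) q := by
    calc (B.card : ℝ) * (k + Aᶜ.card) = ∑ _j ∈ B, ((k : ℝ) + Aᶜ.card) := by
          rw [Finset.sum_const, nsmul_eq_mul]
      _ ≤ _ := Finset.sum_le_sum (fun j _ => hrow_y j)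
  have ha0 : (0:ℝ) ≤ A.card := Nat.cast_nonneg _
  have hb0 : (0:ℝ) ≤ B.card := Nat.cast_nonneg _
  rw [hcut]
  rw [hAc] at hrow_s hy_sum
  rw [hBc] at hx_sum
  rw [hrow_s]
  nlinarith [hx_sum, hy_sum, mul_nonneg hb0 (sub_nonneg.mpr hak)]

theorem maxFlow_B_eq_k_sq (k : ℕ) (hk : 1 ≤ k) (ε : Fin k → Fin k → ℝ)
    (hε : ∀ i j, 0 < ε i j ∧ ε i j < 1 / k) :
    minCut (Bcap k ε) BNode.s BNode.t = (k : ℝ) ^ 2 := by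
  classical
  have hε' : ∀ i j, 0 < ε i j := fun i j => (hε i j).1
  -- the cut {s} has capacity k^2
  have hsingle : cutCap (Bcap k ε) {BNode.s} = (k : ℝ) ^ 2 := by
    rw [cutCap, Finset.sum_singleton]
    have hs : BNode.s ∈ ({BNode.s} : Finset (BNode k)) := by simp
    have ht : BNode.t ∉ ({BNode.s} : Finset (BNode k)) := by simp
    rw [sum_compl_decomp _ hs ht]
    have hAc : (univ.filter (fun i : Fin k => BNode.x i ∈ ({BNode.s} : Finset (BNode k))))ᶜ
        = univ := by
      ext i; simp
    rw [hAc]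
    simp [Bcap, sq, mul_comm]
  have hmem : (k : ℝ) ^ 2 ∈ {r | ∃ S : Finset (BNode k), BNode.s ∈ S ∧ BNode.t ∉ S ∧
      r = cutCap (Bcap k ε) S} := ⟨{BNode.s}, by simp, by simp, hsingle.symm⟩
  have hlb : ∀ r ∈ {r | ∃ S : Finset (BNode k), BNode.s ∈ S ∧ BNode.t ∉ S ∧
      r = cutCap (Bcap k ε) S}, (k : ℝ)^2 ≤ r := by
    rintro r ⟨S, hs, ht, rfl⟩
    exact cutCap_lower ε hε' S hs ht
  refine le_antisymm (csInf_le ⟨(k:ℝ)^2, fun r hr => hlb r hr⟩ hmem) (le_csInf ⟨_, hmem⟩ hlb)
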